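/- Let Φ ⊆ FO ∪ ∼FO (first-order formulas and strongly negated first-order formulas). Then Φ is satisfiable in team semantics if and only if its first-order translation Φ_f is satisfiable in classical first-order semantics, where Φ_f replaces the free variables of each γ ∈ Φ ∩ FO by fresh constants c^x_δ for each ∼δ ∈ Φ ∩ ∼FO, and replaces each ∼δ(x₁,…,xₙ) by ¬δ(c^{x₁}_δ,…,c^{xₙ}_δ). -/

import Mathlib

open FirstOrder FirstOrder.Language

/-- Team satisfaction of a classical first-order formula: all assignments of
the team satisfy it. -/
def TeamSatFO (L : Language) (M : Type) [inst : L.Structure M]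
    (T : Set (ℕ → M)) (γ : L.Formula ℕ) : Prop :=
  ∀ s ∈ T, γ.Realize s

/-- Team satisfaction of a strongly negated first-order formula ∼δ: the team
does not satisfy δ, i.e., some assignment falsifies δ. -/
def TeamSatNegFO (L : Language) (M : Type) [inst : L.Structure M]
    (T : Set (ℕ → M)) (δ : L.Formula ℕ) : Prop :=
  ∃ s ∈ T, ¬ δ.Realize s

/-- The sentence obtained from γ by replacing each free variable x by the
fresh constant c x, in the expansion of L by constants from C. -/
def withConstantsSentence (L : Language) (C : Type) (c : ℕ → C)
    (γ : L.Formula ℕ) : (L[[C]]).Sentence :=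
  BoundedFormula.subst ((L.lhomWithConstants C).onFormula γ)
    (fun x => Constants.term (L.con (c x)))

lemma realize_wcs {L : Language} {C N : Type} [instN : (L[[C]]).Structure N]
    [instL : L.Structure N] [Nonempty N] [(L.lhomWithConstants C).IsExpansionOn N]
    (c : ℕ → C) (γ : L.Formula ℕ) :
    Sentence.Realize (M := N) (withConstantsSentence L C c γ) ↔
      γ.Realize (fun x => ((L.con (c x) : L[[C]].Constants) : N)) := by
  rw [withConstantsSentence, Sentence.Realize, Formula.Realize,
    BoundedFormula.realize_subst]
  show Formula.Realize ((L.lhomWithConstants C).onFormula γ)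
      (fun a => Term.realize default (L.con (c a)).term) ↔ _
  simp only [Term.realize_constants]
  rw [LHom.realize_onFormula]

theorem team_satisfiable_iff_translation_satisfiable
    (L : Language) (Γ Δ : Set (L.Formula ℕ)) :
    (∃ (M : Type) (inst : L.Structure M) (_ : Nonempty M) (T : Set (ℕ → M)),
      (∀ γ ∈ Γ, TeamSatFO L M (inst := inst) T γ) ∧
      (∀ δ ∈ Δ, TeamSatNegFO L M (inst := inst) T δ)) ↔
    (∃ (N : Type) (inst : (L[[ℕ × ↥Δ]]).Structure N) (_ : Nonempty N),
      (∀ γ ∈ Γ, ∀ δ : ↥Δ,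
        Sentence.Realize (M := N)
          (withConstantsSentence L (ℕ × ↥Δ) (fun x => (x, δ)) γ)) ∧
      (∀ δ : ↥Δ,
        Sentence.Realize (M := N)
          (withConstantsSentence L (ℕ × ↥Δ) (fun x => (x, δ)) (Formula.not δ.1)))) := by
  constructor
  · rintro ⟨M, inst, hM, T, hΓ, hΔ⟩
    choose s hsT hs using fun δ : ↥Δ => hΔ δ.1 δ.2
    letI instC : (constantsOn (ℕ × ↥Δ)).Structure M :=
      constantsOn.structure (fun p => s p.2 p.1)
    refine ⟨M, inferInstance, hM, ?_, ?_⟩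
    · intro γ hγ δ
      rw [realize_wcs]
      exact hΓ γ hγ _ (hsT δ)
    · intro δ
      rw [realize_wcs]
      simp only [Formula.realize_not]
      exact hs δ
  · rintro ⟨N, instN, hN, h1, h2⟩
    letI instL : L.Structure N := (L.lhomWithConstants (ℕ × ↥Δ)).reduct N
    haveI : (L.lhomWithConstants (ℕ × ↥Δ)).IsExpansionOn N :=
      LHom.isExpansionOn_reduct _ N
    refine ⟨N, instL, hN,
      Set.range (fun δ : ↥Δ => fun x : ℕ => ((L.con (x, δ) : (L[[ℕ × ↥Δ]]).Constants) : N)),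
      ?_, ?_⟩
    · rintro γ hγ t ⟨δ, rfl⟩
      exact (realize_wcs _ γ).1 (h1 γ hγ δ)
    · intro δ hδ
      refine ⟨_, ⟨⟨δ, hδ⟩, rfl⟩, ?_⟩
      have := (realize_wcs (N := N) (fun x : ℕ => (x, (⟨δ, hδ⟩ : ↥Δ)))
        (Formula.not δ)).1 (h2 ⟨δ, hδ⟩)
      simpa using this
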